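/- Let K be a field and k₁, …, k_r ≥ 2 multiplicatively independent integers. The K-algebra homomorphism from the iterated skew polynomial ring K[x][y₁;σ₁]…[y_r;σ_r] (where σ_i(x) = x^{k_i}, σ_i(y_j) = y_j for j < i) to End_K(K⟦x⟧) sending x to multiplication by x and y_i to the Mahler operator M_{k_i} : F(x) ↦ F(x^{k_i}) is injective. -/

import Mathlib

open scoped Classical

/-- Substitution `x ↦ x^m` in a formal power series (for `m ≥ 1`): the Mahler operator. -/
noncomputable def substPow {K : Type*} [Semiring K] (m : ℕ) (F : PowerSeries K) :
    PowerSeries K :=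
  PowerSeries.mk fun n => if m ≠ 0 ∧ m ∣ n then PowerSeries.coeff (n / m) F else 0

/-- A polynomial regarded as a power series. -/
noncomputable def toPS {K : Type*} [Semiring K] (P : Polynomial K) : PowerSeries K :=
  PowerSeries.mk fun n => P.coeff n

lemma substPow_X_pow {K : Type*} [Semiring K] (m N : ℕ) (hm : m ≠ 0) :
    substPow m ((PowerSeries.X : PowerSeries K) ^ N) = PowerSeries.X ^ (m * N) := by
  ext n
  rw [substPow, PowerSeries.coeff_mk]
  simp only [PowerSeries.coeff_X_pow]
  by_cases h : n = m * N
  · subst h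
    rw [if_pos ⟨hm, ⟨N, rfl⟩⟩, Nat.mul_div_cancel_left _ (Nat.pos_of_ne_zero hm),
      if_pos rfl, if_pos rfl]
  · rw [if_neg h]
    by_cases hd : m ∣ n
    · obtain ⟨c, rfl⟩ := hd
      rw [if_pos ⟨hm, ⟨c, rfl⟩⟩, Nat.mul_div_cancel_left _ (Nat.pos_of_ne_zero hm), if_neg]
      rintro rfl
      exact h rfl
    · rw [if_neg (by tauto)]

lemma mindep_inj (r : ℕ) (k : Fin r → ℕ) (hk : ∀ i, 2 ≤ k i)
    (hindep : ∀ e : Fin r → ℤ, (∏ i, ((k i : ℚ) ^ (e i))) = 1 → e = 0)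
    (a b : Fin r → ℕ) (h : ∏ i, k i ^ a i = ∏ i, k i ^ b i) : a = b := by
  have hk0 : ∀ i, (k i : ℚ) ≠ 0 := fun i => by
    have := hk i; positivity
  have key : (∏ i, ((k i : ℚ)) ^ ((a i : ℤ) - (b i : ℤ))) = 1 := by
    have : (∏ i, ((k i : ℚ)) ^ ((a i : ℤ) - (b i : ℤ)))
        = (∏ i, ((k i : ℚ)) ^ (a i : ℤ)) / ∏ i, ((k i : ℚ)) ^ (b i : ℤ) := by
      rw [← Finset.prod_div_distrib]
      exact Finset.prod_congr rfl fun i _ => zpow_sub₀ (hk0 i) _ _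
    rw [this]
    have hq : (∏ i, ((k i : ℚ)) ^ (a i : ℤ)) = ∏ i, ((k i : ℚ)) ^ (b i : ℤ) := by
      have : ((∏ i, k i ^ a i : ℕ) : ℚ) = ((∏ i, k i ^ b i : ℕ) : ℚ) := by
        exact_mod_cast congrArg (fun x : ℕ => (x : ℚ)) h
      push_cast at this
      simpa [zpow_natCast] using this
    rw [hq, div_self]
    refine Finset.prod_ne_zero_iff.mpr fun i _ => ?_
    exact zpow_ne_zero _ (hk0 i)
  have := hindep _ key
  funext i
  have hi := congrFun this i
  simp only [Pi.zero_apply, sub_eq_zero] at hi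
  exact_mod_cast hi

/-- For multiplicatively independent `k₁, …, k_r ≥ 2`, the representation
of Mahler operators is faithful: if a finitely supported family of polynomial
coefficients `P` gives the zero operator `F ↦ Σ P_{i₁,…,i_r}(x) · F(x^{k₁^{i₁}⋯k_r^{i_r}})`
on `K⟦x⟧`, then `P = 0`. -/
theorem mahler_operator_representation_injective
    (K : Type*) [Field K] [CharZero K] (r : ℕ) (k : Fin r → ℕ)
    (hk : ∀ i, 2 ≤ k i)
    (hindep : ∀ e : Fin r → ℤ, (∏ i, ((k i : ℚ) ^ (e i))) = 1 → e = 0)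
    (P : (Fin r → ℕ) →₀ Polynomial K)
    (hP : ∀ F : PowerSeries K,
      (P.sum fun idx Q => toPS Q * substPow (∏ i, k i ^ idx i) F) = 0) :
    P = 0 := by
  set m : (Fin r → ℕ) → ℕ := fun idx => ∏ i, k i ^ idx i with hm
  have hm0 : ∀ idx, m idx ≠ 0 := fun idx => by
    refine Finset.prod_ne_zero_iff.mpr fun i _ => ?_
    have := hk i
    positivity
  have hminj : Function.Injective m := fun a b hab => mindep_inj r k hk hindep a b hab
  set D : ℕ := P.support.sup fun idx => (P idx).natDegree with hD
  ext idx j0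
  by_cases hidx : idx ∈ P.support
  swap
  · simp [Finsupp.notMem_support_iff.mp hidx]
  set N : ℕ := D + j0 + 1 with hN
  set n : ℕ := j0 + m idx * N with hn
  have h1 := hP ((PowerSeries.X : PowerSeries K) ^ N)
  have h2 := congrArg (PowerSeries.coeff n) h1
  rw [map_zero, Finsupp.sum, map_sum] at h2
  have h3 : ∀ i ∈ P.support,
      (PowerSeries.coeff n) (toPS (P i) * substPow (m i) ((PowerSeries.X : PowerSeries K) ^ N))
      = if i = idx then (P idx).coeff j0 else 0 := by
    intro i hi
    rw [substPow_X_pow _ _ (hm0 i), PowerSeries.coeff_mul_X_pow']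
    by_cases hie : i = idx
    · subst hie
      rw [if_pos (by omega), if_pos rfl]
      have : n - m i * N = j0 := by omega
      rw [this, toPS, PowerSeries.coeff_mk]
    · rw [if_neg hie]
      have hne : m i ≠ m idx := fun h => hie (hminj h)
      rcases lt_or_gt_of_ne hne with hlt | hgt
      · -- m i < m idx : coefficient index too big
        have hmul : (m i + 1) * N ≤ m idx * N := Nat.mul_le_mul_right N hlt
        rw [add_mul, one_mul] at hmul
        rw [if_pos (by omega)]
        have hdeg : (P i).natDegree ≤ D := Finset.le_sup (f := fun idx => (P idx).natDegree) hi
        have hbig : (P i).natDegree < n - m i * N := by omega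
        rw [toPS, PowerSeries.coeff_mk, Polynomial.coeff_eq_zero_of_natDegree_lt hbig]
      · -- m idx < m i : too small
        rw [if_neg]
        have hmul : (m idx + 1) * N ≤ m i * N := Nat.mul_le_mul_right N hgt
        rw [add_mul, one_mul] at hmul
        omega
    
  rw [Finset.sum_congr rfl h3, Finset.sum_ite_eq' _ idx, if_pos hidx] at h2
  simpa using h2
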